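/- Let F be a finite field, let 2 ≤ l ≤ n, and let M = (m_{i,j}) be an n×n upper-triangular matrix over F[x] with det(M) ≠ 0 whose top-left (l−1)×(l−1) block is the diagonal matrix diag(d_1, …, d_{l-1}). Define M' = (m'_{i,j}) by m'_{i,l} = m_{i,l} − T_{deg(d_i)}(m_{i,l}) for 1 ≤ i ≤ l−1, and m'_{i,j} = m_{i,j} for all other entries. Then for every natural number k, the set {g ∈ GL_n(F[x]) : gM satisfies P(k)} equals the set {g ∈ GL_n(F[x]) : gM' satisfies P(k)}. -/

import Mathlib

open Polynomial Matrix

/-- The truncation `T_u(f) = Σ_{0 ≤ i ≤ u} a_i x^i` of a polynomial `f = Σ_i a_i x^i`. -/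
noncomputable def truncPoly {R : Type*} [CommRing R] (u : ℕ) (f : R[X]) : R[X] :=
  ∑ i ∈ Finset.range (u + 1), Polynomial.C (f.coeff i) * Polynomial.X ^ i

lemma truncPoly_degree_le {R : Type*} [CommRing R] (u : ℕ) (f : R[X]) :
    (truncPoly u f).degree ≤ (u : WithBot ℕ) := by
  refine (Polynomial.degree_sum_le _ _).trans ?_
  rw [Finset.sup_le_iff]
  intro i hi
  refine (Polynomial.degree_C_mul_X_pow_le _ _).trans ?_
  exact_mod_cast Nat.le_of_lt_succ (Finset.mem_range.mp hi)

/-- Let `M` be an upper-triangular `n × n` matrix over `F[x]` with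
`det M ≠ 0` whose top-left `(l-1) × (l-1)` block is diagonal with diagonal entries `d_i`.
Replacing the entries `m_{i,l}` (`1 ≤ i ≤ l-1`) by `m_{i,l} - T_{deg d_i}(m_{i,l})` does not
change the set of `g ∈ GL_n(F[x])` such that `gM` satisfies `P(k)`, for any `k`. -/
theorem stmt_13 (F : Type*) [Field F] [Fintype F]
    (n l : ℕ) (hl2 : 2 ≤ l) (hln : l ≤ n)
    (M : Matrix (Fin n) (Fin n) F[X])
    (htri : ∀ i j : Fin n, (j : ℕ) < (i : ℕ) → M i j = 0)
    (hdet : M.det ≠ 0)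
    (hdiag : ∀ i j : Fin n, (i : ℕ) < l - 1 → (j : ℕ) < l - 1 → i ≠ j → M i j = 0)
    (M' : Matrix (Fin n) (Fin n) F[X])
    (hM' : ∀ i j : Fin n, M' i j =
      if (j : ℕ) = l - 1 ∧ (i : ℕ) < l - 1 then
        M i j - truncPoly ((M i i).natDegree) (M i j)
      else M i j) :
    ∀ k : ℕ,
      {g : GL (Fin n) F[X] |
          ∀ i j, (((g : Matrix (Fin n) (Fin n) F[X]) * M) i j).degree ≤ (k : ℕ)} =
      {g : GL (Fin n) F[X] |
          ∀ i j, (((g : Matrix (Fin n) (Fin n) F[X]) * M') i j).degree ≤ (k : ℕ)} := by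
  intro k
  -- the diagonal entries are nonzero
  have hdet' : ∀ i : Fin n, M i i ≠ 0 := by
    have h : M.det = ∏ i, M i i :=
      Matrix.det_of_upperTriangular (fun i j hij => htri i j hij)
    rw [h] at hdet
    intro i hi
    exact hdet (Finset.prod_eq_zero (Finset.mem_univ i) hi)
  -- columns j < l-1 of M are concentrated on the diagonal
  have hcol : ∀ (A : Matrix (Fin n) (Fin n) F[X]) (r j : Fin n), (j : ℕ) < l - 1 →
      (A * M) r j = A r j * M j j := by
    intro A r j hj
    rw [Matrix.mul_apply]
    apply Finset.sum_eq_single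
    · intro i _ hij
      rcases lt_trichotomy (i : ℕ) (j : ℕ) with h | h | h
      · rw [hdiag i j (h.trans hj) hj hij, mul_zero]
      · exact absurd (Fin.ext h) hij
      · rw [htri i j h, mul_zero]
    · intro h; exact absurd (Finset.mem_univ j) h
  -- columns j ≠ l-1 agree between M and M'
  have hMM' : ∀ i j : Fin n, (j : ℕ) ≠ l - 1 → M' i j = M i j := by
    intro i j h; rw [hM']; simp [h]
  -- key bound on the correction term
  have hkey : ∀ (A : Matrix (Fin n) (Fin n) F[X]),
      (∀ r i : Fin n, (i : ℕ) < l - 1 → ((A * M) r i).degree ≤ (k : ℕ)) →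
      ∀ r j : Fin n, ((∑ i, A r i * (M i j - M' i j)).degree ≤ (k : ℕ)) := by
    intro A hA r j
    refine (Polynomial.degree_sum_le _ _).trans ?_
    rw [Finset.sup_le_iff]
    intro i _
    rw [hM']
    split_ifs with h
    · obtain ⟨hj, hi⟩ := h
      have h1 : M i j - (M i j - truncPoly (M i i).natDegree (M i j)) =
          truncPoly (M i i).natDegree (M i j) := by ring
      rw [h1, Polynomial.degree_mul]
      have h2 : (truncPoly (M i i).natDegree (M i j)).degree ≤ (M i i).degree := by
        refine (truncPoly_degree_le _ _).trans ?_
        rw [Polynomial.degree_eq_natDegree (hdet' i)]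
      calc (A r i).degree + (truncPoly (M i i).natDegree (M i j)).degree
          ≤ (A r i).degree + (M i i).degree := add_le_add (le_refl _) h2
        _ = ((A * M) r i).degree := by rw [hcol A r i hi, Polynomial.degree_mul]
        _ ≤ (k : ℕ) := hA r i hi
    · simp
  -- decomposition A * M' = A * M - correction
  have hdecomp : ∀ (A : Matrix (Fin n) (Fin n) F[X]) (r j : Fin n),
      (A * M') r j = (A * M) r j - ∑ i, A r i * (M i j - M' i j) := by
    intro A r j
    rw [Matrix.mul_apply, Matrix.mul_apply, ← Finset.sum_sub_distrib]
    apply Finset.sum_congr rfl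
    intro t _
    ring
  ext g
  simp only [Set.mem_setOf_eq]
  set A := (g : Matrix (Fin n) (Fin n) F[X]) with hA
  constructor
  · intro H i j
    have hb := hkey A (fun r i _ => H r i) i j
    rw [hdecomp]
    exact (Polynomial.degree_sub_le _ _).trans (max_le (H i j) hb)
  · intro H i j
    have hAM : ∀ r i : Fin n, (i : ℕ) < l - 1 → ((A * M) r i).degree ≤ (k : ℕ) := by
      intro r i hi
      have heq : (A * M) r i = (A * M') r i := by
        rw [Matrix.mul_apply, Matrix.mul_apply]
        apply Finset.sum_congr rfl
        intro t _
        rw [hMM' t i (by omega)]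
      rw [heq]; exact H r i
    have hb := hkey A hAM i j
    have heq : (A * M) i j = (A * M') i j + ∑ t, A i t * (M t j - M' t j) := by
      rw [hdecomp]; ring
    rw [heq]
    exact (Polynomial.degree_add_le _ _).trans (max_le (H i j) hb)
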